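/- arXiv:1509.04629 — 2 statements merged into one kernel-verified Lean document; each statement's English description precedes it below -/
import Mathlib

section
/- Let L : ℝ → ℝ^{n×n} be continuous, let Φ_U, Φ_W : ℝ → ℝ^{r×r} be continuous skew-symmetric matrix functions, and let R_0 ∈ ℝ^{r×r} be an orthogonal matrix. Suppose W : ℝ → ℝ^{n×r} is a differentiable solution of dW/dt = L(t)W − W(Wᵀ L(t) W − Φ_W(t)) with W(t)ᵀW(t) = I for all t, and R : ℝ → ℝ^{r×r} solves dR/dt = R Φ_U(t) − Φ_W(t) R with R(0) = R_0. Then U(t) := W(t) R(t) is a differentiable solution of dU/dt = L(t)U − U(Uᵀ L(t) U − Φ_U(t)) with U(0) = W(0) R_0. In particular, two OTD subspaces evolved with different skew-symmetric gauge functions that are initially equivalent (equal up to right multiplication by an orthogonal matrix) remain equivalent for all t > 0. -/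
open Matrix

attribute [local instance] Matrix.normedAddCommGroup Matrix.normedSpace

noncomputable instance matCLMNormedAddCommGroup {a b c d : ℕ} :
    NormedAddCommGroup (Matrix (Fin a) (Fin b) ℝ →L[ℝ] Matrix (Fin c) (Fin d) ℝ) :=
  ContinuousLinearMap.toNormedAddCommGroup

noncomputable instance matCLMNormedSpace {a b c d : ℕ} :
    NormedSpace ℝ (Matrix (Fin a) (Fin b) ℝ →L[ℝ] Matrix (Fin c) (Fin d) ℝ) :=
  ContinuousLinearMap.toNormedSpace

noncomputable instance matCLM2NormedAddCommGroup {a b c d e f : ℕ} :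
    NormedAddCommGroup (Matrix (Fin a) (Fin b) ℝ →L[ℝ]
      Matrix (Fin c) (Fin d) ℝ →L[ℝ] Matrix (Fin e) (Fin f) ℝ) :=
  ContinuousLinearMap.toNormedAddCommGroup

noncomputable def mulCLM (a b c : ℕ) :
    Matrix (Fin a) (Fin b) ℝ →L[ℝ] Matrix (Fin b) (Fin c) ℝ →L[ℝ] Matrix (Fin a) (Fin c) ℝ :=
  LinearMap.toContinuousLinearMap
    { toFun := fun A => LinearMap.toContinuousLinearMap
        { toFun := fun B => A * B
          map_add' := fun x y => Matrix.mul_add A x y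
          map_smul' := fun c x => (Matrix.mul_smul A c x) }
      map_add' := fun x y => by ext B; simp [Matrix.add_mul]
      map_smul' := fun c x => by ext B; simp [Matrix.smul_mul] }

@[simp] lemma mulCLM_apply {a b c : ℕ} (A : Matrix (Fin a) (Fin b) ℝ)
    (B : Matrix (Fin b) (Fin c) ℝ) : mulCLM a b c A B = A * B := rfl

lemma HasDerivAt.matmul {a b c : ℕ} {f : ℝ → Matrix (Fin a) (Fin b) ℝ}
    {g : ℝ → Matrix (Fin b) (Fin c) ℝ} {f' g'} {t : ℝ}
    (hf : HasDerivAt f f' t) (hg : HasDerivAt g g' t) :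
    HasDerivAt (fun s => f s * g s) (f' * g t + f t * g') t := by
  have h1 : HasDerivAt (fun s => mulCLM a b c (f s)) (mulCLM a b c f') t :=
    (mulCLM a b c).hasFDerivAt.comp_hasDerivAt t hf
  exact h1.clm_apply hg

noncomputable def transCLM (a b : ℕ) :
    Matrix (Fin a) (Fin b) ℝ →L[ℝ] Matrix (Fin b) (Fin a) ℝ :=
  LinearMap.toContinuousLinearMap
    { toFun := fun A => Aᵀ
      map_add' := fun x y => Matrix.transpose_add x y
      map_smul' := fun c x => Matrix.transpose_smul c x }

lemma HasDerivAt.mtrans {a b : ℕ} {f : ℝ → Matrix (Fin a) (Fin b) ℝ} {f'} {t : ℝ}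
    (hf : HasDerivAt f f' t) : HasDerivAt (fun s => (f s)ᵀ) f'ᵀ t :=
  (transCLM a b).hasFDerivAt.comp_hasDerivAt t hf

lemma comm_ode_const {r : ℕ} (ΦU : ℝ → Matrix (Fin r) (Fin r) ℝ) (hΦUc : Continuous ΦU)
    (G : ℝ → Matrix (Fin r) (Fin r) ℝ)
    (hG : ∀ t, HasDerivAt G (G t * ΦU t - ΦU t * G t) t)
    (hG0 : G 0 = 1) : ∀ t, G t = 1 := by
  intro t
  set a : ℝ := -(|t| + 1) with ha
  set b : ℝ := |t| + 1 with hb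
  have hb0 : (0:ℝ) < b := by positivity
  have hab : a < b := by simp only [ha]; linarith
  have htmem : t ∈ Set.Icc a b := by
    constructor
    · simp only [ha, hb]; linarith [neg_abs_le t]
    · simp only [hb]; linarith [le_abs_self t]
  -- clamped coefficient
  set A : ℝ → Matrix (Fin r) (Fin r) ℝ := fun s => ΦU (max a (min b s)) with hA
  have hclamp : ∀ s, max a (min b s) ∈ Set.Icc a b := by
    intro s
    refine ⟨le_max_left _ _, max_le hab.le (min_le_left _ _)⟩
  obtain ⟨C, hC⟩ := (isCompact_Icc (a := a) (b := b)).exists_bound_of_continuousOn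
    hΦUc.continuousOn
  have hAnorm : ∀ s, ‖A s‖ ≤ max C 0 := fun s =>
    le_max_of_le_left (hC _ (hclamp s))
  set M : ℝ := ‖mulCLM r r r‖ with hM
  have hM0 : 0 ≤ M := hM ▸ ContinuousLinearMap.opNorm_nonneg _
  set Kr : ℝ := 2 * M * max C 0 with hK
  have hKr0 : 0 ≤ Kr := by positivity
  set v : ℝ → Matrix (Fin r) (Fin r) ℝ → Matrix (Fin r) (Fin r) ℝ :=
    fun s x => x * A s - A s * x with hv
  have hmulb : ∀ (X Y : Matrix (Fin r) (Fin r) ℝ), ‖X * Y‖ ≤ M * ‖X‖ * ‖Y‖ := by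
    intro X Y
    exact (mulCLM r r r).le_opNorm₂ X Y
  have hlip : ∀ s, LipschitzWith Kr.toNNReal (v s) := by
    intro s
    apply LipschitzWith.of_dist_le_mul
    intro x y
    rw [dist_eq_norm, dist_eq_norm]
    have he : v s x - v s y = (x - y) * A s - A s * (x - y) := by
      simp only [hv]; noncomm_ring
    rw [he]
    have h1 := hmulb (x - y) (A s)
    have h2 := hmulb (A s) (x - y)
    have h3 : ‖(x - y) * A s - A s * (x - y)‖ ≤ ‖(x - y) * A s‖ + ‖A s * (x - y)‖ :=
      norm_sub_le _ _
    have h4 := hAnorm s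
    have h5 : (0:ℝ) ≤ ‖x - y‖ := norm_nonneg _
    have hco : (Kr.toNNReal : ℝ) = Kr := Real.coe_toNNReal _ hKr0
    rw [hco]
    calc ‖(x - y) * A s - A s * (x - y)‖ ≤ M * ‖x - y‖ * ‖A s‖ + M * ‖A s‖ * ‖x - y‖ :=
          le_trans h3 (add_le_add h1 h2)
      _ ≤ M * ‖x - y‖ * max C 0 + M * (max C 0) * ‖x - y‖ := by
          have := mul_nonneg hM0 h5
          have hx : M * ‖x - y‖ * ‖A s‖ ≤ M * ‖x - y‖ * max C 0 := by
            apply mul_le_mul_of_nonneg_left h4 (by positivity)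
          have hy : M * ‖A s‖ * ‖x - y‖ ≤ M * (max C 0) * ‖x - y‖ := by
            apply mul_le_mul_of_nonneg_right (mul_le_mul_of_nonneg_left h4 hM0) h5
          exact add_le_add hx hy
      _ = Kr * ‖x - y‖ := by ring
  have key := ODE_solution_unique_of_mem_Icc (v := v) (s := fun _ => Set.univ)
    (K := Kr.toNNReal) (t₀ := 0)
    (fun s _ => (hlip s).lipschitzOnWith)
    (show (0:ℝ) ∈ Set.Ioo a b from Set.mem_Ioo.mpr ⟨by rw [ha]; linarith, hb0⟩)
    (fun s _ => (hG s).continuousAt.continuousWithinAt)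
    (fun s hs => by
      have hcl : max a (min b s) = s := by
        rw [min_eq_right hs.2.le, max_eq_right hs.1.le]
      simp only [hv, hA, hcl]; exact hG s)
    (fun s _ => Set.mem_univ _)
    (continuousOn_const (c := (1 : Matrix (Fin r) (Fin r) ℝ)))
    (fun s _ => by simpa [hv] using hasDerivAt_const s (1 : Matrix (Fin r) (Fin r) ℝ))
    (fun s _ => Set.mem_univ _)
    (by simpa using hG0)
  exact key htmem

/-- Theorem 2 of the paper: if W solves the OTD equation with gauge Φ_W and has
orthonormal columns, and R solves dR/dt = R Φ_U(t) − Φ_W(t) R with orthogonal initial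
condition R(0) = R₀, then U := W·R solves the OTD equation with gauge Φ_U,
U(0) = W(0)·R₀, and the two subspaces remain equivalent (R(t) stays orthogonal)
for all t > 0. -/
theorem stmt4 {n r : ℕ} (L : ℝ → Matrix (Fin n) (Fin n) ℝ) (hL : Continuous L)
    (ΦU ΦW : ℝ → Matrix (Fin r) (Fin r) ℝ)
    (hΦUc : Continuous ΦU) (hΦWc : Continuous ΦW)
    (hΦU : ∀ t, (ΦU t)ᵀ = -(ΦU t)) (hΦW : ∀ t, (ΦW t)ᵀ = -(ΦW t))
    (R0 : Matrix (Fin r) (Fin r) ℝ) (hR0 : R0ᵀ * R0 = 1)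
    (W : ℝ → Matrix (Fin n) (Fin r) ℝ)
    (hW : ∀ t, HasDerivAt W (L t * W t - W t * ((W t)ᵀ * L t * W t - ΦW t)) t)
    (hWo : ∀ t, (W t)ᵀ * W t = 1)
    (R : ℝ → Matrix (Fin r) (Fin r) ℝ)
    (hR : ∀ t, HasDerivAt R (R t * ΦU t - ΦW t * R t) t)
    (hRinit : R 0 = R0) :
    (∀ t, HasDerivAt (fun s => W s * R s)
        (L t * (W t * R t) -
          (W t * R t) * ((W t * R t)ᵀ * L t * (W t * R t) - ΦU t)) t) ∧
      W 0 * R 0 = W 0 * R0 ∧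
      ∀ t > (0 : ℝ), (R t)ᵀ * R t = 1 := by
  -- derivative of G = Rᵀ R
  have hGderiv : ∀ t, HasDerivAt (fun s => (R s)ᵀ * R s)
      ((R t)ᵀ * R t * ΦU t - ΦU t * ((R t)ᵀ * R t)) t := by
    intro t
    have h := ((hR t).mtrans).matmul (hR t)
    convert h using 1
    have h1 := hΦU t
    have h2 := hΦW t
    simp only [Matrix.transpose_sub, Matrix.transpose_mul, h1, h2]
    noncomm_ring
  have hGone : ∀ t, (R t)ᵀ * R t = 1 :=
    comm_ode_const ΦU hΦUc _ hGderiv (by rw [hRinit, hR0])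
  have hRRt : ∀ t, R t * (R t)ᵀ = 1 := fun t => mul_eq_one_comm.mp (hGone t)
  refine ⟨?_, by rw [hRinit], fun t _ => hGone t⟩
  intro t
  have h := (hW t).matmul (hR t)
  convert h using 1
  have hWW : W t * ((W t)ᵀ * (L t * (W t * R t))) =
      W t * (R t * ((R t)ᵀ * ((W t)ᵀ * (L t * (W t * R t))))) := by
    rw [← Matrix.mul_assoc (R t) (R t)ᵀ, hRRt, Matrix.one_mul]
  simp only [Matrix.transpose_mul, Matrix.mul_sub, Matrix.sub_mul, Matrix.mul_assoc]
  rw [← hWW]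
  noncomm_ring
end

section
/- Let L : ℝ → ℝ^{n×n} be a continuous matrix-valued function. Suppose U : ℝ → ℝ^{n×r} is a differentiable solution of the OTD equation dU/dt = L(t)U − U L_r(t), where L_r(t) = U(t)ᵀ L(t) U(t), and T : ℝ → ℝ^{r×r} is the differentiable solution of dT/dt = L_r(t) T with T(0) = T_0. Let V : ℝ → ℝ^{n×r} be any differentiable solution of the time-dependent linearized dynamics dV/dt = L(t)V with V(0) = U(0) T_0. Then V(t) = U(t) T(t) for all t. -/
open Matrix Set

attribute [local instance] Matrix.normedAddCommGroup Matrix.normedSpace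

private lemma hasDerivAt_matrix {a b : ℕ} {f : ℝ → Matrix (Fin a) (Fin b) ℝ}
    {f' : Matrix (Fin a) (Fin b) ℝ} {t : ℝ} :
    HasDerivAt f f' t ↔ ∀ i j, HasDerivAt (fun τ => f τ i j) (f' i j) t := by
  exact hasDerivAt_pi.trans (forall_congr' fun i => hasDerivAt_pi)

private lemma HasDerivAt.matrix_mul {a b c : ℕ} {A : ℝ → Matrix (Fin a) (Fin b) ℝ}
    {B : ℝ → Matrix (Fin b) (Fin c) ℝ} {A' : Matrix (Fin a) (Fin b) ℝ}
    {B' : Matrix (Fin b) (Fin c) ℝ} {t : ℝ} (hA : HasDerivAt A A' t)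
    (hB : HasDerivAt B B' t) :
    HasDerivAt (fun τ => A τ * B τ) (A' * B t + A t * B') t := by
  rw [hasDerivAt_matrix] at hA hB ⊢
  intro i j
  have : ∀ τ, (A τ * B τ) i j = ∑ k, A τ i k * B τ k j := fun τ => Matrix.mul_apply
  simp only [this]
  have h := HasDerivAt.fun_sum (fun k (_ : k ∈ Finset.univ) => (hA i k).fun_mul (hB k j))
  convert h using 1
  case e'_9 => simp [Matrix.add_apply, Matrix.mul_apply, Finset.sum_add_distrib]
  all_goals rfl

private lemma matrix_norm_mul_le {a b c : ℕ} (A : Matrix (Fin a) (Fin b) ℝ)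
    (B : Matrix (Fin b) (Fin c) ℝ) : ‖A * B‖ ≤ b * ‖A‖ * ‖B‖ := by
  rw [Matrix.norm_le_iff (by positivity)]
  intro i j
  rw [Matrix.mul_apply]
  calc ‖∑ k, A i k * B k j‖ ≤ ∑ k, ‖A i k * B k j‖ := norm_sum_le _ _
    _ ≤ ∑ _k : Fin b, ‖A‖ * ‖B‖ := by
        refine Finset.sum_le_sum fun k _ => ?_
        rw [norm_mul]
        exact mul_le_mul (Matrix.norm_entry_le_entrywise_sup_norm A)
          (Matrix.norm_entry_le_entrywise_sup_norm B) (norm_nonneg _) (norm_nonneg _)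
    _ = b * ‖A‖ * ‖B‖ := by simp [Finset.sum_const, mul_assoc]

/-- Theorem 4 of the paper: if U solves the OTD equation dU/dt = L(t)U − U L_r(t)
with L_r(t) = U(t)ᵀ L(t) U(t), T solves dT/dt = L_r(t) T with T(0) = T₀, and V solves
the linearized dynamics dV/dt = L(t)V with V(0) = U(0) T₀, then V(t) = U(t) T(t)
for all t. -/
theorem stmt13 {n r : ℕ} (L : ℝ → Matrix (Fin n) (Fin n) ℝ) (hL : Continuous L)
    (U : ℝ → Matrix (Fin n) (Fin r) ℝ)
    (hU : ∀ t, HasDerivAt U (L t * U t - U t * ((U t)ᵀ * L t * U t)) t)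
    (T : ℝ → Matrix (Fin r) (Fin r) ℝ) (T0 : Matrix (Fin r) (Fin r) ℝ)
    (hT : ∀ t, HasDerivAt T ((U t)ᵀ * L t * U t * T t) t) (hT0 : T 0 = T0)
    (V : ℝ → Matrix (Fin n) (Fin r) ℝ)
    (hV : ∀ t, HasDerivAt V (L t * V t) t) (hV0 : V 0 = U 0 * T0) :
    ∀ t, V t = U t * T t := by
  intro t
  set a : ℝ := -(|t| + 1) with ha
  set b : ℝ := |t| + 1 with hb
  have hab : a < b := by
    have : (0:ℝ) < |t| + 1 := by positivity
    simp only [ha, hb]; linarith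
  -- bound for L on [a, b]
  obtain ⟨C, hC⟩ : ∃ C, ∀ s ∈ Icc a b, ‖L s‖ ≤ C := by
    obtain ⟨C, hC⟩ := (isCompact_Icc (a := a) (b := b)).exists_bound_of_continuousOn
      (hL.continuousOn.norm)
    exact ⟨C, fun s hs => by simpa using hC s hs⟩
  have hC0 : 0 ≤ C := le_trans (norm_nonneg _) (hC a ⟨le_refl a, hab.le⟩)
  -- the clamped vector field
  set proj : ℝ → ℝ := fun s => min b (max a s) with hproj
  have hprojmem : ∀ s, proj s ∈ Icc a b := fun s =>
    ⟨le_min (by linarith) (le_max_left _ _), min_le_left _ _⟩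
  have hprojeq : ∀ s ∈ Icc a b, proj s = s := fun s hs => by
    simp only [hproj]
    rw [max_eq_right hs.1, min_eq_right hs.2]
  set v : ℝ → Matrix (Fin n) (Fin r) ℝ → Matrix (Fin n) (Fin r) ℝ :=
    fun s X => L (proj s) * X with hv
  set K : NNReal := Real.toNNReal (n * C) with hK
  have hKeq : (K : ℝ) = n * C := Real.coe_toNNReal _ (by positivity)
  have hvlip : ∀ s, LipschitzOnWith K (v s) univ := by
    intro s
    apply LipschitzWith.lipschitzOnWith
    apply LipschitzWith.of_dist_le_mul
    intro X Y
    simp only [hv, dist_eq_norm, hKeq]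
    rw [← Matrix.mul_sub]
    calc ‖L (proj s) * (X - Y)‖ ≤ n * ‖L (proj s)‖ * ‖X - Y‖ := matrix_norm_mul_le _ _
      _ ≤ n * C * ‖X - Y‖ := by
          exact mul_le_mul_of_nonneg_right
            (mul_le_mul_of_nonneg_left (hC (proj s) (hprojmem s)) (Nat.cast_nonneg n))
            (norm_nonneg _)
  -- g = U * T solves the same ODE
  set g : ℝ → Matrix (Fin n) (Fin r) ℝ := fun τ => U τ * T τ with hg
  have hg' : ∀ τ, HasDerivAt g (L τ * g τ) τ := by
    intro τ
    have h := (hU τ).matrix_mul (hT τ)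
    convert h using 1
    simp only [hg, Matrix.sub_mul, Matrix.mul_assoc]
    abel
  have key : EqOn V g (Icc a b) := by
    apply ODE_solution_unique_of_mem_Icc (v := v) (s := fun _ => univ) (fun s _ => hvlip s)
      (t₀ := (0:ℝ))
    · constructor <;> simp only [ha, hb] <;> [linarith [abs_nonneg t]; positivity]
    · exact fun τ _ => (hV τ).continuousAt.continuousWithinAt
    · intro τ hτ
      have : v τ (V τ) = L τ * V τ := by
        simp only [hv, hprojeq τ (Ioo_subset_Icc_self hτ)]
      rw [this]; exact hV τ
    · exact fun τ _ => mem_univ _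
    · exact fun τ _ => (hg' τ).continuousAt.continuousWithinAt
    · intro τ hτ
      have : v τ (g τ) = L τ * g τ := by
        simp only [hv, hprojeq τ (Ioo_subset_Icc_self hτ)]
      rw [this]; exact hg' τ
    · exact fun τ _ => mem_univ _
    · simp only [hg]; rw [hV0, hT0]
  have ht : t ∈ Icc a b := by
    constructor
    · simp only [ha]; have := neg_abs_le t; linarith
    · simp only [hb]; have := le_abs_self t; linarith
  exact key ht
end
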